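/- Let k ≥ 1, let p^(1),…,p^(k+1) be pairwise distinct s–t paths with c(p^(1)) ≤ … ≤ c(p^(k+1)) such that every s–t path not equal to any p^(i) has cost at least c(p^(k+1)), and assume c(p^(k)) < c(p^(k+1)). Let S be a set of k distinct cascading via-paths such that every CVP not in S has cost at least the maximum cost of a CVP in S (the k shortest CVPs), let V′ be the union of the vertex sets of the maximal RPCs associated with the CVPs in S, and let G′ = (V′, E′) with E′ = {(u,w) ∈ E : u ∈ V′ and w ∈ V′}, with edge weights inherited from G. Then each p^(i), 1 ≤ i ≤ k, is a path of G′, and every s–t path of G′ not equal to any of p^(1),…,p^(k) has cost strictly greater than c(p^(k)); i.e., the k shortest s–t paths of G′ are the same as the k shortest s–t paths of G. -/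

import Mathlib

variable {V : Type*}

/-- `p` is a path from `u` to `w` in the digraph with edge relation `E`:
a nonempty finite sequence of vertices beginning at `u` and ending at `w`
in which every consecutive pair of vertices is an edge. -/
def IsPath (E : V → V → Prop) (p : List V) (u w : V) : Prop :=
  p ≠ [] ∧ p.head? = some u ∧ p.getLast? = some w ∧ p.Chain' E

/-- The cost of a path: the sum of the weights of its edges. -/
def pathCost (c : V → V → ℝ) (p : List V) : ℝ :=
  ((p.zip p.tail).map fun e => c e.1 e.2).sum

/-- A shortest path from `u` to `w`: a path from `u` to `w` of minimum cost. -/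
def IsShortestPath (E : V → V → Prop) (c : V → V → ℝ) (p : List V) (u w : V) : Prop :=
  IsPath E p u w ∧ ∀ q, IsPath E q u w → pathCost c p ≤ pathCost c q

/-- A via-path for `v`: an `s`–`t` path of minimum cost among all `s`–`t`
paths passing through `v`. -/
def IsViaPath (E : V → V → Prop) (c : V → V → ℝ) (s t v : V) (p : List V) : Prop :=
  IsPath E p s t ∧ v ∈ p ∧ ∀ q, IsPath E q s t → v ∈ q → pathCost c p ≤ pathCost c q

/-- The minimum cost of an `s`–`t` path passing through `v`. -/
noncomputable def viaCost (E : V → V → Prop) (c : V → V → ℝ) (s t v : V) : ℝ :=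
  sInf (pathCost c '' {p | IsPath E p s t ∧ v ∈ p})

/-- A predecessor shortest path tree rooted at the source `s`: a map `b`
assigning to each vertex `v ≠ s` a vertex `b v` with an edge from `b v` to `v`,
such that iterating `b` from any `v` terminates at `s` and the resulting path
`pathTo v` (read from `s` to `v`) is a shortest path from `s` to `v`. -/
structure PredSPT (E : V → V → Prop) (c : V → V → ℝ) (s : V) where
  b : V → V
  pathTo : V → List V
  edge : ∀ v, v ≠ s → E (b v) v
  pathTo_src : pathTo s = [s]
  pathTo_step : ∀ v, v ≠ s → pathTo v = pathTo (b v) ++ [v]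
  shortest : ∀ v, IsShortestPath E c (pathTo v) s v

/-- A successor shortest path tree rooted at the target `t`: a map `f`
assigning to each vertex `v ≠ t` a vertex `f v` with an edge from `v` to `f v`,
such that iterating `f` from any `v` terminates at `t` and the resulting path
`pathFrom v` is a shortest path from `v` to `t`. -/
structure SuccSPT (E : V → V → Prop) (c : V → V → ℝ) (t : V) where
  f : V → V
  pathFrom : V → List V
  edge : ∀ v, v ≠ t → E v (f v)
  pathFrom_tgt : pathFrom t = [t]
  pathFrom_step : ∀ v, v ≠ t → pathFrom v = v :: pathFrom (f v)
  shortest : ∀ v, IsShortestPath E c (pathFrom v) v t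

variable {E : V → V → Prop} {c : V → V → ℝ} {s t : V}

/-- The cascading via-path (CVP) of a vertex `v`: the tree path `p̃_{s,v}`
followed by the tree path `p̃_{v,t}`. -/
def CVP (B : PredSPT E c s) (F : SuccSPT E c t) (v : V) : List V :=
  B.pathTo v ++ (F.pathFrom v).tail

/-- A reciprocal pointer chain (RPC): a nonempty sequence of vertices
`(v_1, …, v_n)` such that for all `1 ≤ i < n`, `b (v_{i+1}) = v_i` and
`f (v_i) = v_{i+1}` (as pointers of the two shortest path trees, so in
particular `v_{i+1} ≠ s` and `v_i ≠ t`). -/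
def IsRPC (B : PredSPT E c s) (F : SuccSPT E c t) (r : List V) : Prop :=
  r ≠ [] ∧ r.Chain' fun x y => y ≠ s ∧ x ≠ t ∧ B.b y = x ∧ F.f x = y

/-- A maximal RPC: an RPC whose set of vertices is not a (strict) subset of the
vertex set of any other RPC. -/
def IsMaximalRPC [DecidableEq V] (B : PredSPT E c s) (F : SuccSPT E c t)
    (r : List V) : Prop :=
  IsRPC B F r ∧
    ∀ r', IsRPC B F r' → r.toFinset ⊆ r'.toFinset → r'.toFinset = r.toFinset

/-- The Jaccard distance between the vertex sets of two paths. -/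
noncomputable def jaccardDist [DecidableEq V] (p q : List V) : ℝ :=
  1 - ((p.toFinset ∩ q.toFinset).card : ℝ) / ((p.toFinset ∪ q.toFinset).card : ℝ)

/-- A plateau: a nonempty sequence of vertices in which every consecutive pair
is an edge and all vertices have the same minimum via-path cost. -/
def IsPlateau (E : V → V → Prop) (c : V → V → ℝ) (s t : V) (q : List V) : Prop :=
  q ≠ [] ∧ q.Chain' fun x y => E x y ∧ viaCost E c s t x = viaCost E c s t y

/-- A maximal plateau: a plateau whose set of vertices is not a (strict) subset
of the vertex set of any other plateau. -/
def IsMaximalPlateau [DecidableEq V] (E : V → V → Prop) (c : V → V → ℝ)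
    (s t : V) (q : List V) : Prop :=
  IsPlateau E c s t q ∧
    ∀ q', IsPlateau E c s t q' → q.toFinset ⊆ q'.toFinset → q'.toFinset = q.toFinset

/-! ### Auxiliary lemmas -/

lemma pathCost_singleton (c : V → V → ℝ) (a : V) : pathCost c [a] = 0 := by
  simp [pathCost]

lemma pathCost_cons (c : V → V → ℝ) (a b : V) (l : List V) :
    pathCost c (a :: b :: l) = c a b + pathCost c (b :: l) := by
  simp [pathCost]

lemma pathCost_append (c : V → V → ℝ) :
    ∀ (p : List V) {q : List V} {v : V}, p.getLast? = some v → q.head? = some v →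
    pathCost c (p ++ q.tail) = pathCost c p + pathCost c q
  | [], q, v, hp, hq => by simp at hp
  | [a], q, v, hp, hq => by
      simp only [List.getLast?_singleton, Option.some.injEq] at hp
      subst hp
      cases q with
      | nil => simp at hq
      | cons b l =>
        simp only [List.head?_cons, Option.some.injEq] at hq
        subst hq
        simp [pathCost_singleton]
  | a :: b :: l, q, v, hp, hq => by
      have hl : (b :: l).getLast? = some v := by
        simpa [List.getLast?_cons_cons] using hp
      have := pathCost_append c (b :: l) hl hq
      simp only [List.cons_append] at this ⊢
      rw [pathCost_cons, pathCost_cons]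
      rw [this]
      ring

lemma IsPath.append_tail {E : V → V → Prop} {p q : List V} {u v w : V}
    (hp : IsPath E p u v) (hq : IsPath E q v w) : IsPath E (p ++ q.tail) u w := by
  obtain ⟨hp0, hp1, hp2, hp3⟩ := hp
  obtain ⟨hq0, hq1, hq2, hq3⟩ := hq
  obtain ⟨b, l, rfl⟩ : ∃ b l, q = b :: l := by
    cases q with
    | nil => exact absurd rfl hq0
    | cons b l => exact ⟨b, l, rfl⟩
  simp only [List.head?_cons, Option.some.injEq] at hq1
  subst hq1
  cases l with
  | nil =>
    simp only [List.getLast?_singleton, Option.some.injEq] at hq2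
    subst hq2
    simpa using ⟨hp0, hp1, hp2, hp3⟩
  | cons b' l' =>
    refine ⟨by simp [hp0], ?_, ?_, ?_⟩
    · rw [List.head?_append, hp1]; rfl
    · rw [List.tail_cons, List.getLast?_append]
      have h2 : (b' :: l').getLast? = some w := by
        simpa [List.getLast?_cons_cons] using hq2
      simp [h2]
    · change List.IsChain E _ at hq3 ⊢
      rw [List.tail_cons, List.isChain_append]
      rw [List.isChain_cons_cons] at hq3
      refine ⟨hp3, hq3.2, ?_⟩
      intro x hx y hy
      rw [hp2] at hx
      simp only [List.head?_cons, Option.mem_def, Option.some.injEq] at hx hy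
      subst hx; subst hy
      exact hq3.1

lemma isPath_split {E : V → V → Prop} {c : V → V → ℝ} {s t : V} {q : List V} {v : V}
    (hq : IsPath E q s t) (hv : v ∈ q) :
    ∃ q1 q2, IsPath E q1 s v ∧ IsPath E q2 v t ∧
      pathCost c q = pathCost c q1 + pathCost c q2 := by
  obtain ⟨l1, l2, rfl⟩ := List.append_of_mem hv
  obtain ⟨h0, h1, h2, h3⟩ := hq
  have hlast1 : (l1 ++ [v]).getLast? = some v := by simp
  have hhead2 : (v :: l2).head? = some v := rfl
  have hpre : (l1 ++ [v]) <+: (l1 ++ v :: l2) := ⟨l2, by simp⟩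
  have hsuf : (v :: l2) <:+ (l1 ++ v :: l2) := ⟨l1, rfl⟩
  refine ⟨l1 ++ [v], v :: l2, ⟨by simp, ?_, hlast1, h3.prefix hpre⟩,
    ⟨by simp, rfl, ?_, h3.suffix hsuf⟩, ?_⟩
  · cases l1 with
    | nil =>
      simp only [List.nil_append, List.head?_cons, Option.some.injEq] at h1
      simp [h1]
    | cons a l =>
      simp only [List.cons_append, List.head?_cons] at h1 ⊢
      exact h1
  · rw [List.getLast?_append] at h2
    have : (v :: l2).getLast? = some ((v :: l2).getLast (by simp)) :=
      List.getLast?_eq_getLast (by simp)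
    rw [this] at h2 ⊢
    simpa using h2
  · have : l1 ++ v :: l2 = (l1 ++ [v]) ++ (v :: l2).tail := by simp
    rw [this, pathCost_append c (l1 ++ [v]) hlast1 hhead2]

lemma CVP_isPath {E : V → V → Prop} {c : V → V → ℝ} {s t : V}
    (B : PredSPT E c s) (F : SuccSPT E c t) (v : V) :
    IsPath E (CVP B F v) s t :=
  (B.shortest v).1.append_tail (F.shortest v).1

lemma CVP_cost {E : V → V → Prop} {c : V → V → ℝ} {s t : V}
    (B : PredSPT E c s) (F : SuccSPT E c t) (v : V) :
    pathCost c (CVP B F v) = pathCost c (B.pathTo v) + pathCost c (F.pathFrom v) :=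
  pathCost_append c _ (B.shortest v).1.2.2.1 (F.shortest v).1.2.1

lemma CVP_cost_le {E : V → V → Prop} {c : V → V → ℝ} {s t : V}
    (B : PredSPT E c s) (F : SuccSPT E c t) (v : V) {q : List V}
    (hq : IsPath E q s t) (hv : v ∈ q) :
    pathCost c (CVP B F v) ≤ pathCost c q := by
  obtain ⟨q1, q2, h1, h2, h3⟩ := isPath_split (c := c) hq hv
  rw [CVP_cost, h3]
  exact add_le_add ((B.shortest v).2 q1 h1) ((F.shortest v).2 q2 h2)

lemma exists_maximalRPC [Fintype V] [DecidableEq V]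
    {E : V → V → Prop} {c : V → V → ℝ} {s t : V}
    (B : PredSPT E c s) (F : SuccSPT E c t) (v : V) :
    ∃ r, IsMaximalRPC B F r ∧ v ∈ r := by
  classical
  have hNE : Nonempty V := ⟨v⟩
  set Q : ℕ → Prop := fun n => ∃ r, IsRPC B F r ∧ v ∈ r ∧ r.toFinset.card = n with hQ
  have h1 : Q 1 := ⟨[v], ⟨by simp, List.isChain_singleton _⟩, by simp, by simp⟩
  have hb : (1 : ℕ) ≤ Fintype.card V := Fintype.card_pos
  obtain ⟨r, hr, hvr, hcard⟩ := Nat.findGreatest_spec hb h1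
  refine ⟨r, ⟨hr, ?_⟩, hvr⟩
  intro r' hr' hsub
  have hv' : v ∈ r' := List.mem_toFinset.mp (hsub (List.mem_toFinset.mpr hvr))
  have hle : r'.toFinset.card ≤ Nat.findGreatest Q (Fintype.card V) := by
    by_contra h
    exact Nat.findGreatest_is_greatest (lt_of_not_ge h)
      ((Finset.card_le_univ _).trans_eq (Finset.card_univ)) ⟨r', hr', hv', rfl⟩
  exact (Finset.eq_of_subset_of_card_le hsub (hcard ▸ hle)).symm

lemma chain'_and_mem {α : Type*} {R : α → α → Prop} {p : α → Prop} :
    ∀ {l : List α}, l.Chain' R → (∀ x ∈ l, p x) →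
      l.Chain' (fun a b => R a b ∧ p a ∧ p b)
  | [], _, _ => List.isChain_nil
  | [_], _, _ => List.isChain_singleton _
  | a :: b :: l, h, hm => by
    change List.IsChain R _ at h
    change List.IsChain _ _
    rw [List.isChain_cons_cons] at h ⊢
    exact ⟨⟨h.1, hm a (by simp), hm b (by simp)⟩,
      chain'_and_mem h.2 (fun x hx => hm x (by simp [hx]))⟩

/-- Let `p^(1), …, p^(k+1)` be the `k+1` shortest `s`–`t` paths
(pairwise distinct, nondecreasing costs, all other paths cost at least
`c(p^(k+1))`), with `c(p^(k)) < c(p^(k+1))`. Let `S` be a set of `k` distinct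
CVPs such that every CVP outside `S` costs at least the maximum cost in `S`,
let `V'` be the union of the vertex sets of the maximal RPCs associated with
the CVPs in `S`, and let `G' = (V', E')` be the induced subgraph. Then the `k`
shortest `s`–`t` paths of `G'` are the same as those of `G`: each `p^(i)`,
`1 ≤ i ≤ k`, is a path of `G'`, and every other `s`–`t` path of `G'` costs
strictly more than `c(p^(k))`. -/
theorem k_shortest_paths_in_reduced_graph [Fintype V] [DecidableEq V]
    {E : V → V → Prop} {c : V → V → ℝ} {s t : V}
    (hc : ∀ u w, E u w → 0 ≤ c u w)
    (B : PredSPT E c s) (F : SuccSPT E c t)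
    (k : ℕ) (hk : 1 ≤ k)
    (P : Fin (k + 1) → List V)
    (hinj : Function.Injective P)
    (hpath : ∀ i, IsPath E (P i) s t)
    (hmono : ∀ i j : Fin (k + 1), i ≤ j → pathCost c (P i) ≤ pathCost c (P j))
    (hrest : ∀ q, IsPath E q s t → (∀ i, q ≠ P i) →
      pathCost c (P (Fin.last k)) ≤ pathCost c q)
    (hgap : pathCost c (P ⟨k - 1, by omega⟩) < pathCost c (P (Fin.last k)))
    (S : Finset (List V)) (hScard : S.card = k)
    (hScvp : ∀ p ∈ S, ∃ v, p = CVP B F v)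
    (hSmin : ∀ w : V, CVP B F w ∉ S → ∀ p ∈ S, pathCost c p ≤ pathCost c (CVP B F w))
    (V' : Set V)
    (hV' : V' = {x | ∃ r, IsMaximalRPC B F r ∧ x ∈ r ∧ CVP B F x ∈ S})
    (E' : V → V → Prop)
    (hE' : E' = fun a b => E a b ∧ a ∈ V' ∧ b ∈ V') :
    (∀ i : Fin (k + 1), (i : ℕ) < k → IsPath E' (P i) s t) ∧
    (∀ q, IsPath E' q s t → (∀ i : Fin (k + 1), (i : ℕ) < k → q ≠ P i) →
      pathCost c (P ⟨k - 1, by omega⟩) < pathCost c q) := by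
  subst hE' hV'
  have hmono' : ∀ i : Fin (k + 1), (i : ℕ) < k →
      pathCost c (P i) ≤ pathCost c (P ⟨k - 1, by omega⟩) := by
    intro i hi
    exact hmono i ⟨k - 1, by omega⟩ (by rw [Fin.le_def]; simp; omega)
  have key : ∀ (i : Fin (k + 1)), (i : ℕ) < k → ∀ v ∈ P i,
      (∃ r, IsMaximalRPC B F r ∧ v ∈ r ∧ CVP B F v ∈ S) := by
    intro i hi v hv
    obtain ⟨r, hr, hvr⟩ := exists_maximalRPC B F v
    refine ⟨r, hr, hvr, ?_⟩
    by_contra hnS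
    have hcv : pathCost c (CVP B F v) < pathCost c (P (Fin.last k)) :=
      lt_of_le_of_lt (le_trans (CVP_cost_le B F v (hpath i) hv) (hmono' i hi)) hgap
    have hS' : ∀ p ∈ insert (CVP B F v) S,
        pathCost c p < pathCost c (P (Fin.last k)) ∧ IsPath E p s t := by
      intro p hp
      rcases Finset.mem_insert.mp hp with rfl | hp
      · exact ⟨hcv, CVP_isPath B F v⟩
      · obtain ⟨w, rfl⟩ := hScvp p hp
        exact ⟨lt_of_le_of_lt (hSmin v hnS _ hp) hcv, CVP_isPath B F w⟩
    have hsub : insert (CVP B F v) S ⊆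
        Finset.image (fun j : Fin k => P j.castSucc) Finset.univ := by
      intro p hp
      obtain ⟨hlt, hpth⟩ := hS' p hp
      by_cases h : ∀ j, p ≠ P j
      · exact absurd (hrest p hpth h) (not_le.mpr hlt)
      push_neg at h
      obtain ⟨j, rfl⟩ := h
      have hj : j ≠ Fin.last k := by rintro rfl; exact lt_irrefl _ hlt
      have hj' : (j : ℕ) < k := Fin.val_lt_last hj
      refine Finset.mem_image.mpr ⟨⟨j, hj'⟩, Finset.mem_univ _, ?_⟩
      congr 1
    have hcard := Finset.card_le_card hsub
    rw [Finset.card_insert_of_notMem hnS, hScard] at hcard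
    have himg : (Finset.image (fun j : Fin k => P j.castSucc) Finset.univ).card ≤ k := by
      refine Finset.card_image_le.trans ?_
      simp
    omega
  constructor
  · intro i hi
    obtain ⟨h0, h1, h2, h3⟩ := hpath i
    exact ⟨h0, h1, h2, chain'_and_mem h3 (fun x hx => key i hi x hx)⟩
  · intro q hq hne
    have hq' : IsPath E q s t :=
      ⟨hq.1, hq.2.1, hq.2.2.1, hq.2.2.2.imp (fun a b h => h.1)⟩
    by_cases h : ∀ j, q ≠ P j
    · exact lt_of_lt_of_le hgap (hrest q hq' h)
    push_neg at h
    obtain ⟨j, rfl⟩ := h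
    rcases lt_or_ge (j : ℕ) k with hj | hj
    · exact absurd rfl (hne j hj)
    · have hjl : j = Fin.last k := Fin.ext (by simp [Fin.val_last]; omega)
      rw [hjl]; exact hgap
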